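/- If the entries of X ∈ F_q^{d×L} are i.i.d. uniform on F_q, then for fixed matrices M₁ ∈ F_q^{d×μ₁} and M₂ ∈ F_q^{d×μ₂}, the conditional entropy H(XᵀM₁ | XᵀM₂) in q-ary units equals L·(rk([M₁, M₂]) − rk(M₂)). -/

import Mathlib

open scoped BigOperators
open Matrix

/-- Probability that the random variable `X` takes the value `a`. -/
noncomputable def pOf {Ω α : Type*} [Fintype Ω] [DecidableEq α]
    (p : Ω → ℝ) (X : Ω → α) (a : α) : ℝ :=
  ∑ ω ∈ Finset.univ.filter (fun ω => X ω = a), p ω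

/-- Shannon entropy (natural units) of a finitely-valued random variable. -/
noncomputable def Hent {Ω α : Type*} [Fintype Ω] [Fintype α] [DecidableEq α]
    (p : Ω → ℝ) (X : Ω → α) : ℝ :=
  ∑ a : α, Real.negMulLog (pOf p X a)

lemma Hent_comp_injective {Ω α β : Type*} [Fintype Ω] [Fintype α] [DecidableEq α]
    [Fintype β] [DecidableEq β]
    (p : Ω → ℝ) (f : Ω → α) (g : α → β) (hg : Function.Injective g) :
    Hent p (fun ω => g (f ω)) = Hent p f := by
  unfold Hent
  rw [← Finset.sum_subset (Finset.subset_univ (Finset.univ.image g))]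
  · rw [Finset.sum_image (fun a _ b _ h => hg h)]
    apply Finset.sum_congr rfl
    intro a _
    congr 1
    unfold pOf
    congr 1
    apply Finset.filter_congr
    intro ω _
    simp [hg.eq_iff]
  · intro b _ hb
    have h0 : pOf p (fun ω => g (f ω)) b = 0 := by
      unfold pOf
      rw [Finset.filter_false_of_mem, Finset.sum_empty]
      intro ω _ h
      exact hb (Finset.mem_image.2 ⟨f ω, Finset.mem_univ _, h⟩)
    simp [h0]

/-- Entropy of a "sub-respecting" (i.e. additive) map of a uniform random variable is the
log of the size of its image. -/
lemma Hent_uniform_sub {Ω α : Type*} [Fintype Ω] [AddCommGroup Ω] [AddCommGroup α]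
    [Fintype α] [DecidableEq α]
    (f : Ω → α) (hf : ∀ x y, f (x - y) = f x - f y) :
    Hent (fun _ : Ω => ((Fintype.card Ω : ℝ))⁻¹) f
      = Real.log ((Finset.univ.image f).card) := by
  classical
  have hN : (0 : ℝ) < (Fintype.card Ω : ℝ) := by exact_mod_cast Fintype.card_pos
  have fadd : ∀ x y, f (x + y) = f x + f y := by
    intro x y
    have h := hf (x + y) y
    simp only [add_sub_cancel_right] at h
    have := sub_eq_iff_eq_add.mp h.symm
    rw [this]
  -- all nonempty fibers have the same cardinality
  have hfib : ∀ a b : Ω,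
      (Finset.univ.filter (fun ω => f ω = f a)).card
        = (Finset.univ.filter (fun ω => f ω = f b)).card := by
    intro a b
    apply Finset.card_nbij' (fun x => x - a + b) (fun x => x - b + a)
    · intro x hx
      simp only [Finset.mem_coe, Finset.mem_filter, Finset.mem_univ, true_and] at hx ⊢
      rw [fadd, hf, hx, sub_self, zero_add]
    · intro x hx
      simp only [Finset.mem_coe, Finset.mem_filter, Finset.mem_univ, true_and] at hx ⊢
      rw [fadd, hf, hx, sub_self, zero_add]
    · intro x _; simp
    · intro x _; simp
  set k := (Finset.univ.filter (fun ω : Ω => f ω = f 0)).card with hk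
  set m := (Finset.univ.image f).card with hm
  have hmk : m * k = Fintype.card Ω := by
    have h := Finset.card_eq_sum_card_fiberwise
      (f := f) (s := Finset.univ) (t := Finset.univ.image f)
      (fun x _ => Finset.mem_image_of_mem f (Finset.mem_univ x))
    rw [Finset.card_univ] at h
    rw [h, Finset.sum_congr rfl (fun b hb => ?_), Finset.sum_const, smul_eq_mul]
    obtain ⟨a, _, rfl⟩ := Finset.mem_image.mp hb
    exact hfib a 0
  have hm0 : 0 < m := by
    rw [hm, Finset.card_pos]
    exact ⟨f 0, Finset.mem_image_of_mem f (Finset.mem_univ 0)⟩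
  have hpOf : ∀ a : α, a ∈ Finset.univ.image f →
      pOf (fun _ : Ω => ((Fintype.card Ω : ℝ))⁻¹) f a = (m : ℝ)⁻¹ := by
    intro a ha
    obtain ⟨x, _, rfl⟩ := Finset.mem_image.mp ha
    unfold pOf
    rw [Finset.sum_const, nsmul_eq_mul, hfib x 0, ← hk]
    have hkm : (k : ℝ) = (Fintype.card Ω : ℝ) / m := by
      rw [eq_div_iff (by exact_mod_cast hm0.ne' : (m : ℝ) ≠ 0)]
      rw [mul_comm] at hmk
      exact_mod_cast hmk
    rw [hkm]
    field_simp
  unfold Hent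
  rw [← Finset.sum_subset (Finset.subset_univ (Finset.univ.image f))]
  · rw [Finset.sum_congr rfl (fun a ha => by rw [hpOf a ha]), Finset.sum_const,
      nsmul_eq_mul, ← hm]
    rw [Real.negMulLog, Real.log_inv]
    have : (m : ℝ) ≠ 0 := by exact_mod_cast hm0.ne'
    field_simp
  · intro b _ hb
    have h0 : pOf (fun _ : Ω => ((Fintype.card Ω : ℝ))⁻¹) f b = 0 := by
      unfold pOf
      rw [Finset.filter_false_of_mem, Finset.sum_empty]
      intro ω _ h
      exact hb (Finset.mem_image.2 ⟨ω, Finset.mem_univ _, h⟩)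
    simp [h0]

/-- The image of `X ↦ Xᵀ * M` has cardinality `q ^ (L * rank M)`. -/
lemma card_image_transpose_mul {F : Type*} [Field F] [Fintype F] [DecidableEq F]
    (d L : ℕ) {n : Type*} [Fintype n] [DecidableEq n]
    (M : Matrix (Fin d) n F) :
    ((Finset.univ.image (fun X : Matrix (Fin d) (Fin L) F => Xᵀ * M)).card)
      = Fintype.card F ^ (L * M.rank) := by
  classical
  have h1 : (Finset.univ.image (fun X : Matrix (Fin d) (Fin L) F => Xᵀ * M)).card
      = Nat.card (Set.range (fun X : Matrix (Fin d) (Fin L) F => Matrix.of.symm (Xᵀ * M))) := by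
    show (Finset.univ.image (fun X : Matrix (Fin d) (Fin L) F => Matrix.of.symm (Xᵀ * M))).card = _
    rw [← Set.toFinset_range, Set.toFinset_card, Nat.card_eq_fintype_card]
  rw [h1]
  have h2 : (fun X : Matrix (Fin d) (Fin L) F => Matrix.of.symm (Xᵀ * M))
      = (Pi.map (fun _ : Fin L => fun v : Fin d → F => v ᵥ* M)) ∘ (fun X : Matrix (Fin d) (Fin L) F => Matrix.of.symm Xᵀ) := by
    funext X
    funext i j
    simp [Pi.map, Matrix.mul_apply, Matrix.vecMul, dotProduct]
  rw [h2, Function.Surjective.range_comp (g := Pi.map _)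
    (f := fun X : Matrix (Fin d) (Fin L) F => Matrix.of.symm Xᵀ)
    (fun Y => ⟨(Matrix.of Y)ᵀ, by simp⟩), Set.range_piMap]
  have h3 : Set.range (fun v : Fin d → F => v ᵥ* M)
      = (LinearMap.range Mᵀ.mulVecLin : Set (n → F)) := by
    ext w
    simp only [LinearMap.mem_range, SetLike.mem_coe, Set.mem_range,
      Matrix.mulVecLin_apply, Matrix.mulVec_transpose]
  rw [Nat.card_congr (Equiv.Set.univPi _)]
  rw [Nat.card_pi, Finset.prod_const, Finset.card_univ, Fintype.card_fin]
  rw [h3]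
  have h4 : Nat.card ↑((LinearMap.range Mᵀ.mulVecLin : Submodule F (n → F)) : Set (n → F))
      = Nat.card (LinearMap.range Mᵀ.mulVecLin) := rfl
  rw [h4, Nat.card_eq_fintype_card,
    Module.card_eq_pow_finrank (K := F) (V := LinearMap.range Mᵀ.mulVecLin),
    ← Matrix.rank, Matrix.rank_transpose, ← pow_mul, Nat.mul_comm]

/-- Entropy of `X ↦ Xᵀ * M` for uniform `X` equals `L * rank M * log q`. -/
lemma Hent_uniform_transpose_mul {F : Type*} [Field F] [Fintype F] [DecidableEq F]
    (d L : ℕ) {n : Type*} [Fintype n] [DecidableEq n]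
    (M : Matrix (Fin d) n F) :
    Hent (fun _ : Matrix (Fin d) (Fin L) F =>
        ((Fintype.card (Matrix (Fin d) (Fin L) F) : ℝ))⁻¹)
      (fun X => Xᵀ * M)
      = (L * M.rank : ℕ) * Real.log (Fintype.card F) := by
  rw [Hent_uniform_sub (fun X => Xᵀ * M)
    (fun x y => by
      show (x - y)ᵀ * M = xᵀ * M - yᵀ * M
      rw [Matrix.transpose_sub, Matrix.sub_mul])]
  rw [card_image_transpose_mul d L M]
  rw [Nat.cast_pow, Real.log_pow]

theorem conditional_entropy_of_uniform_linear_image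
    {F : Type*} [Field F] [Fintype F] [DecidableEq F]
    (d L μ₁ μ₂ : ℕ)
    (M₁ : Matrix (Fin d) (Fin μ₁) F) (M₂ : Matrix (Fin d) (Fin μ₂) F) :
    (Hent (fun _ : Matrix (Fin d) (Fin L) F =>
          ((Fintype.card (Matrix (Fin d) (Fin L) F) : ℝ))⁻¹)
        (fun X => (Xᵀ * M₁, Xᵀ * M₂))
      - Hent (fun _ : Matrix (Fin d) (Fin L) F =>
          ((Fintype.card (Matrix (Fin d) (Fin L) F) : ℝ))⁻¹)
        (fun X => Xᵀ * M₂)) / Real.log (Fintype.card F)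
    = (L : ℝ) * (((Matrix.fromCols M₁ M₂).rank : ℝ) - (M₂.rank : ℝ)) := by
  classical
  have hq : (1 : ℝ) < (Fintype.card F : ℝ) := by exact_mod_cast Fintype.one_lt_card
  have hlog : Real.log (Fintype.card F) ≠ 0 := (Real.log_pos hq).ne'
  -- rewrite the joint map via fromCols
  have hjoint : Hent (fun _ : Matrix (Fin d) (Fin L) F =>
          ((Fintype.card (Matrix (Fin d) (Fin L) F) : ℝ))⁻¹)
        (fun X => (Xᵀ * M₁, Xᵀ * M₂))
      = Hent (fun _ : Matrix (Fin d) (Fin L) F =>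
          ((Fintype.card (Matrix (Fin d) (Fin L) F) : ℝ))⁻¹)
        (fun X => Xᵀ * Matrix.fromCols M₁ M₂) := by
    have hg : Function.Injective
        (fun Y : Matrix (Fin L) (Fin μ₁ ⊕ Fin μ₂) F =>
          (Matrix.toCols₁ Y, Matrix.toCols₂ Y)) := by
      intro Y Z h
      have h1 := congrArg Prod.fst h
      have h2 := congrArg Prod.snd h
      simp only at h1 h2
      rw [← Matrix.fromCols_toCols Y, ← Matrix.fromCols_toCols Z, h1, h2]
    have := Hent_comp_injective
      (fun _ : Matrix (Fin d) (Fin L) F =>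
          ((Fintype.card (Matrix (Fin d) (Fin L) F) : ℝ))⁻¹)
      (fun X => Xᵀ * Matrix.fromCols M₁ M₂)
      (fun Y => (Matrix.toCols₁ Y, Matrix.toCols₂ Y)) hg
    have hfun : (fun X : Matrix (Fin d) (Fin L) F => (Xᵀ * M₁, Xᵀ * M₂))
        = fun X => ((fun Y => (Matrix.toCols₁ Y, Matrix.toCols₂ Y))
            (Xᵀ * Matrix.fromCols M₁ M₂)) := by
      funext X
      simp [Matrix.mul_fromCols, Matrix.toCols₁_fromCols,
        Matrix.toCols₂_fromCols]
    rw [hfun]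
    exact this
  rw [hjoint, Hent_uniform_transpose_mul, Hent_uniform_transpose_mul]
  rw [div_eq_iff hlog]
  push_cast
  ring
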